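/- Let 𝔛 be any collection of measurable subsets of ℝ^d, let c: 𝔛 → ℝ be any function, and let f: ℝ^d × ℝ → ℝ be any fixed function. For each 𝒳 ∈ 𝔛 define the set 𝒳̃ = {(x,y) ∈ ℝ^d × ℝ : x ∈ 𝒳 and f(x,y) > c(𝒳)}. Then VC({𝒳̃ : 𝒳 ∈ 𝔛}) ≤ VC(𝔛) + 1. -/

import Mathlib

noncomputable section

/-- `F` shatters `A` if every subset of `A` is cut out by a member of `F`. -/
def Shatters {S : Type*} (F : Set (Set S)) (A : Set S) : Prop :=
  ∀ B ⊆ A, ∃ T ∈ F, T ∩ A = B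

/-- The Vapnik–Chervonenkis dimension of a collection of sets, valued in `ℕ∞`:
the supremum of the cardinalities of finite shattered sets. -/
def VCdim {S : Type*} (F : Set (Set S)) : ℕ∞ :=
  ⨆ (A : Finset S) (_ : Shatters F (A : Set S)), (A.card : ℕ∞)

/-- **Lemma (VC dimension of residual-threshold classes):** for any collection `𝔛` of
subsets of `ℝ^d`, any threshold function `c : Set (ℝ^d) → ℝ`, and any fixed `f`, the
collection of sets `𝒳̃ = {(x,y) : x ∈ 𝒳, f(x,y) > c(𝒳)}`, `𝒳 ∈ 𝔛`, has VC dimension at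
most `VC(𝔛) + 1`. -/
theorem vcdim_residual_class_le (d : ℕ) (𝔛 : Set (Set (Fin d → ℝ)))
    (c : Set (Fin d → ℝ) → ℝ) (f : (Fin d → ℝ) × ℝ → ℝ) :
    VCdim {T : Set ((Fin d → ℝ) × ℝ) |
        ∃ 𝒳 ∈ 𝔛, T = {p : (Fin d → ℝ) × ℝ | p.1 ∈ 𝒳 ∧ c 𝒳 < f p}} ≤
      VCdim 𝔛 + 1 := by
  set F : Set (Set ((Fin d → ℝ) × ℝ)) := {T : Set ((Fin d → ℝ) × ℝ) |
        ∃ 𝒳 ∈ 𝔛, T = {p : (Fin d → ℝ) × ℝ | p.1 ∈ 𝒳 ∧ c 𝒳 < f p}} with hF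
  refine iSup₂_le fun A hA => ?_
  rcases A.eq_empty_or_nonempty with rfl | hne
  · simp
  -- first projection is injective on A
  have hinj : ∀ p ∈ A, ∀ q ∈ A, p.1 = q.1 → p = q := by
    intro p hp q hq hpq
    by_contra hne'
    obtain ⟨T, hT, hTA⟩ := hA {p} (by simp [hp])
    obtain ⟨𝒳, _, rfl⟩ := hT
    have hpT : p ∈ {p : (Fin d → ℝ) × ℝ | p.1 ∈ 𝒳 ∧ c 𝒳 < f p} := by
      have : p ∈ ({p} : Set _) := rfl
      rw [← hTA] at this; exact this.1
    have hqT : q ∉ {p : (Fin d → ℝ) × ℝ | p.1 ∈ 𝒳 ∧ c 𝒳 < f p} := by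
      intro hq'
      have : q ∈ ({p} : Set _) := hTA ▸ ⟨hq', hq⟩
      exact hne' (this.symm)
    have h1 : f q ≤ c 𝒳 := by
      by_contra h
      exact hqT ⟨hpq ▸ hpT.1, lt_of_not_ge h⟩
    have hfq : f q < f p := lt_of_le_of_lt h1 hpT.2
    -- symmetric
    obtain ⟨T', hT', hTA'⟩ := hA {q} (by simp [hq])
    obtain ⟨𝒴, _, rfl⟩ := hT'
    have hqT' : q ∈ {p : (Fin d → ℝ) × ℝ | p.1 ∈ 𝒴 ∧ c 𝒴 < f p} := by
      have : q ∈ ({q} : Set _) := rfl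
      rw [← hTA'] at this; exact this.1
    have hpT' : p ∉ {p : (Fin d → ℝ) × ℝ | p.1 ∈ 𝒴 ∧ c 𝒴 < f p} := by
      intro hp'
      have : p ∈ ({q} : Set _) := hTA' ▸ ⟨hp', hp⟩
      exact hne' this
    have h2 : f p ≤ c 𝒴 := by
      by_contra h
      exact hpT' ⟨hpq ▸ hqT'.1, lt_of_not_ge h⟩
    exact absurd (lt_of_le_of_lt h2 hqT'.2) (not_lt.2 hfq.le)
  -- point of minimal f-value
  obtain ⟨p₀, hp₀A, hp₀min⟩ := A.exists_min_image f hne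
  set A' : Finset (Fin d → ℝ) := (A.erase p₀).image Prod.fst with hA'
  -- A' is shattered by 𝔛
  have hshat : Shatters 𝔛 (A' : Set (Fin d → ℝ)) := by
    intro B hB
    -- preimage of B in A.erase p₀, plus p₀
    set C : Set ((Fin d → ℝ) × ℝ) :=
      {q | q ∈ A.erase p₀ ∧ q.1 ∈ B} ∪ {p₀} with hC
    have hCA : C ⊆ (A : Set _) := by
      rintro q (⟨hq, _⟩ | rfl)
      · exact Finset.mem_of_mem_erase hq
      · exact hp₀A
    obtain ⟨T, hT, hTA⟩ := hA C hCA
    obtain ⟨𝒳, h𝒳, rfl⟩ := hT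
    refine ⟨𝒳, h𝒳, ?_⟩
    have hp₀T : p₀ ∈ {p : (Fin d → ℝ) × ℝ | p.1 ∈ 𝒳 ∧ c 𝒳 < f p} := by
      have : p₀ ∈ C := Or.inr rfl
      rw [← hTA] at this; exact this.1
    ext x
    simp only [hA', Set.mem_inter_iff, Finset.coe_image, Set.mem_image, Finset.mem_coe]
    constructor
    · rintro ⟨hx𝒳, q, hq, rfl⟩
      -- q ∈ A.erase p₀, q.1 ∈ 𝒳; show q.1 ∈ B
      by_contra hqB
      have hqC : q ∉ C := by
        rintro (⟨_, hB'⟩ | rfl)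
        · exact hqB hB'
        · exact (Finset.ne_of_mem_erase hq) rfl
      have hqT : q ∉ {p : (Fin d → ℝ) × ℝ | p.1 ∈ 𝒳 ∧ c 𝒳 < f p} := by
        intro h
        exact hqC (hTA ▸ ⟨h, Finset.mem_of_mem_erase hq⟩)
      have hfq : f q ≤ c 𝒳 := by
        by_contra h
        exact hqT ⟨hx𝒳, lt_of_not_ge h⟩
      have : f q < f p₀ := lt_of_le_of_lt hfq hp₀T.2
      exact absurd (hp₀min q (Finset.mem_of_mem_erase hq)) (not_le.2 this)
    · intro hxB
      have hx' := hB hxB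
      rw [hA'] at hx'
      simp only [Finset.coe_image, Set.mem_image, Finset.mem_coe] at hx'
      obtain ⟨q, hq, rfl⟩ := hx'
      have hqC : q ∈ C := Or.inl ⟨hq, hxB⟩
      have hqT : q ∈ {p : (Fin d → ℝ) × ℝ | p.1 ∈ 𝒳 ∧ c 𝒳 < f p} := by
        have := hTA ▸ hqC
        exact this.1
      exact ⟨hqT.1, q, hq, rfl⟩
  have hcard : A'.card = A.card - 1 := by
    rw [hA', Finset.card_image_of_injOn, Finset.card_erase_of_mem hp₀A]
    intro p hp q hq hpq
    exact hinj p (Finset.mem_of_mem_erase (by exact_mod_cast hp)) q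
      (Finset.mem_of_mem_erase (by exact_mod_cast hq)) hpq
  have hle : (A'.card : ℕ∞) ≤ VCdim 𝔛 := le_iSup₂_of_le A' hshat le_rfl
  have hpos : 1 ≤ A.card := Finset.card_pos.2 hne
  have hAcard : A.card = A'.card + 1 := by rw [hcard]; omega
  calc (A.card : ℕ∞) = (A'.card : ℕ∞) + 1 := by rw [hAcard]; push_cast; ring
    _ ≤ VCdim 𝔛 + 1 := add_le_add_left hle 1
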